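/- For any d×d circulant matrix M with unit-norm columns that form a frame (all eigenvalues nonzero), there exists a circulant matrix M̃ whose columns are unit vectors forming a frame, such that M and M̃ form a pair of mutually unbiased frames; the overlap is c = 1/(Σ_{j=0}^{d−1} 1/r_j²), where r_j = |λ(M)_j|. -/

import Mathlib

open Matrix

/-- The discrete Fourier transform matrix `F_{jk} = ω^{jk}/√d`, `ω = e^{2πi/d}`. -/
noncomputable def Fmat (d : ℕ) : Matrix (Fin d) (Fin d) ℂ :=
  fun j k => Complex.exp (2 * Real.pi * Complex.I * ((j : ℕ) : ℂ) * ((k : ℕ) : ℂ) / d) /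
    (Real.sqrt d : ℂ)

/-- The circulant matrix with first row `v`: entries `M_{jk} = v_{(k-j) mod d}`. -/
def circulantRow {d : ℕ} (v : Fin d → ℂ) : Matrix (Fin d) (Fin d) ℂ :=
  fun j k => v (k - j)

namespace MUF

variable (d : ℕ)

noncomputable def E (n : ℤ) : ℂ := Complex.exp (2 * Real.pi * Complex.I * n / d)

lemma E_add (m n : ℤ) : E d (m + n) = E d m * E d n := by
  rw [E, E, E, ← Complex.exp_add]
  congr 1
  push_cast
  ring

lemma E_zero : E d 0 = 1 := by simp [E]

lemma E_dvd {n : ℤ} (h : (d : ℤ) ∣ n) : E d n = 1 := by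
  obtain ⟨k, rfl⟩ := h
  rcases Nat.eq_zero_or_pos d with hd | hd
  · simp [E, hd]
  · have hd' : (d:ℂ) ≠ 0 := Nat.cast_ne_zero.mpr hd.ne'
    rw [E, show (2 * (Real.pi:ℂ) * Complex.I * (((d:ℤ)*k : ℤ):ℂ) / d) = (k:ℂ) * (2 * Real.pi * Complex.I) by
      push_cast; field_simp]
    exact Complex.exp_int_mul_two_pi_mul_I k

lemma E_mod {m n : ℤ} (h : (d : ℤ) ∣ m - n) : E d m = E d n := by
  have : E d (n + (m - n)) = E d n * E d (m - n) := E_add d n (m - n)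
  rw [E_dvd d h, mul_one] at this
  simpa using this

lemma E_conj (n : ℤ) : (starRingEnd ℂ) (E d n) = E d (-n) := by
  rw [E, E, ← Complex.exp_conj]
  congr 1
  simp only [map_div₀, _root_.map_mul, Complex.conj_I, Complex.conj_ofReal, map_ofNat,
    map_intCast, map_natCast]
  push_cast
  ring

lemma E_pow (m : ℤ) (k : ℕ) : E d m ^ k = E d (m * k) := by
  induction k with
  | zero => simp [E_zero]
  | succ k ih => rw [pow_succ, ih, ← E_add]; congr 1; push_cast; ring


lemma E_ne_one (hd : d ≠ 0) {m : ℤ} (hm : ¬ (d:ℤ) ∣ m) : E d m ≠ 1 := by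
  intro h
  rw [E, Complex.exp_eq_one_iff] at h
  obtain ⟨n, hn⟩ := h
  apply hm
  refine ⟨n, ?_⟩
  have hd' : (d:ℂ) ≠ 0 := Nat.cast_ne_zero.mpr hd
  have hpi : (Real.pi:ℂ) ≠ 0 := by exact_mod_cast Real.pi_ne_zero
  have : (m:ℂ) = (d:ℂ) * n := by
    field_simp at hn
    have hh : (m:ℂ) * (2 * Real.pi * Complex.I) = ((d:ℂ) * n) * (2 * Real.pi * Complex.I) := by
      rw [mul_comm] at hn ⊢
      linear_combination (2 * (Real.pi:ℂ) * Complex.I) * hn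
    exact mul_right_cancel₀ (by simp [hpi, Complex.I_ne_zero]) hh
  exact_mod_cast this

lemma orth (hd : d ≠ 0) (m : ℤ) : ∑ a : Fin d, E d (m * a.val) = if (d:ℤ) ∣ m then (d:ℂ) else 0 := by
  have key : ∀ a : Fin d, E d (m * a.val) = E d m ^ (a.val) := fun a => (E_pow d m a.val).symm ▸ rfl
  simp only [fun a : Fin d => (E_pow d m a.val).symm]
  rw [Fin.sum_univ_eq_sum_range (fun i => E d m ^ i)]
  split_ifs with h
  · simp [E_dvd d h]
  · rw [geom_sum_eq (E_ne_one d hd h), E_pow, E_dvd d ⟨m, by ring⟩]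
    simp

noncomputable def B (n : ℤ) : ℂ := Complex.exp (Real.pi * Complex.I * (d + 1) * n ^ 2 / d)

lemma B_mod {m n : ℤ} (h : (d : ℤ) ∣ m - n) : B d m = B d n := by
  rcases Nat.eq_zero_or_pos d with hd | hd
  · subst hd; simp only [Int.ofNat_zero, CharP.cast_eq_zero, zero_dvd_iff, sub_eq_zero] at h; rw [h]
  obtain ⟨q, hq⟩ := h
  have hm : m = n + d * q := by omega
  obtain ⟨r, hr⟩ : ∃ r : ℤ, (d:ℤ) * (d + 1) = 2 * r := by obtain ⟨t, ht⟩ := Int.even_mul_succ_self (d:ℤ); exact ⟨t, by omega⟩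
  have key : ((d:ℤ) + 1) * (m ^ 2 - n ^ 2) = 2 * d * ((d+1) * n * q + q^2 * r) := by
    rw [hm]; ring_nf; linear_combination (q^2 : ℤ) * d * hr
  have hd' : (d:ℂ) ≠ 0 := Nat.cast_ne_zero.mpr hd.ne'
  rw [B, B, show (Real.pi:ℂ) * Complex.I * (d + 1) * m ^ 2 / d
      = Real.pi * Complex.I * (d + 1) * n ^ 2 / d
        + (((d:ℤ)+1) * n * q + q^2 * r : ℤ) * (2 * Real.pi * Complex.I) by
    have keyC : (((d:ℤ) + 1) * (m ^ 2 - n ^ 2) : ℂ) = ((2 * d * ((d+1) * n * q + q^2 * r) : ℤ) : ℂ) := by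
      exact_mod_cast congrArg (fun z : ℤ => (z:ℂ)) key
    push_cast at keyC ⊢
    field_simp
    linear_combination keyC]
  rw [Complex.exp_add, Complex.exp_int_mul_two_pi_mul_I, mul_one]

lemma B_add (m n : ℤ) : B d (m + n) = B d m * B d n * E d (m * n) := by
  rcases Nat.eq_zero_or_pos d with hd | hd
  · subst hd; simp [B, E]
  have hd' : (d:ℂ) ≠ 0 := Nat.cast_ne_zero.mpr hd.ne'
  rw [B, B, B, E, ← Complex.exp_add, ← Complex.exp_add,
    show (Real.pi:ℂ) * Complex.I * (d + 1) * (m + n : ℤ) ^ 2 / d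
      = (Real.pi * Complex.I * (d + 1) * m ^ 2 / d + Real.pi * Complex.I * (d + 1) * n ^ 2 / d
        + 2 * Real.pi * Complex.I * (m * n : ℤ) / d) + (m * n : ℤ) * (2 * Real.pi * Complex.I) by
    push_cast; field_simp; ring]
  rw [Complex.exp_add, Complex.exp_int_mul_two_pi_mul_I, mul_one]

lemma B_conj (n : ℤ) : (starRingEnd ℂ) (B d n) * B d n = 1 := by
  rw [B, ← Complex.exp_conj, ← Complex.exp_add]
  rw [show (starRingEnd ℂ) ((Real.pi:ℂ) * Complex.I * (d + 1) * n ^ 2 / d)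
      = -((Real.pi:ℂ) * Complex.I * (d + 1) * n ^ 2 / d) by
    simp only [map_div₀, _root_.map_mul, Complex.conj_I, Complex.conj_ofReal, map_ofNat,
      map_intCast, map_natCast, map_add, _root_.map_one, map_pow]
    ring]
  simp


lemma flat (hd : d ≠ 0) (m : ℤ) :
    (∑ a : Fin d, E d (m * a.val) * B d a.val) *
      (starRingEnd ℂ) (∑ a : Fin d, E d (m * a.val) * B d a.val) = d := by
  haveI : NeZero d := ⟨hd⟩
  rw [map_sum, Finset.sum_mul_sum]
  rw [Finset.sum_comm]
  have step : ∀ a' : Fin d,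
      (∑ a : Fin d, (E d (m * a.val) * B d a.val) *
        (starRingEnd ℂ) (E d (m * a'.val) * B d a'.val))
      = ∑ k : Fin d, E d (m * k.val) * B d k.val * E d ((a'.val : ℤ) * k.val) := by
    intro a'
    rw [← Equiv.sum_comp (Equiv.addLeft a') (fun a => (E d (m * a.val) * B d a.val) *
        (starRingEnd ℂ) (E d (m * a'.val) * B d a'.val))]
    apply Finset.sum_congr rfl
    intro k _
    simp only [Equiv.coe_addLeft]
    have hmod : (d : ℤ) ∣ (((a' + k : Fin d).val : ℤ) - ((a'.val : ℤ) + k.val)) := by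
      have h1 : ((a' + k : Fin d)).val = (a'.val + k.val) % d := by
        simp [Fin.add_def]
      refine ⟨-(((a'.val + k.val) / d : ℕ) : ℤ), ?_⟩
      have h2 : (d:ℤ) * (((a'.val + k.val) / d : ℕ):ℤ) + (((a'.val + k.val) % d : ℕ):ℤ)
          = ((a'.val + k.val : ℕ):ℤ) := by exact_mod_cast Nat.div_add_mod (a'.val + k.val) d
      rw [h1]
      push_cast at h2 ⊢
      linear_combination h2
    rw [E_mod d (show (d:ℤ) ∣ m * ((a' + k : Fin d).val : ℤ) - m * ((a'.val : ℤ) + k.val) by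
          rw [← mul_sub]; exact Dvd.dvd.mul_left hmod m),
        B_mod d hmod, B_add]
    rw [_root_.map_mul, E_conj]
    rw [show m * ((a'.val : ℤ) + k.val) = m * a'.val + m * k.val by ring, E_add]
    have h1 : E d (m * a'.val) * E d (-(m * a'.val)) = 1 := by
      rw [← E_add]; simp [E_zero]
    have hc := B_conj d a'.val
    have expand : E d (m * ↑a'.val) * E d (m * ↑k.val) *
          (B d ↑a'.val * B d ↑k.val * E d (↑a'.val * ↑k.val)) *
          (E d (-(m * ↑a'.val)) * (starRingEnd ℂ) (B d ↑a'.val))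
        = (E d (m * a'.val) * E d (-(m * a'.val))) *
          ((starRingEnd ℂ) (B d a'.val) * B d a'.val) *
          (E d (m * k.val) * B d k.val * E d ((a'.val : ℤ) * k.val)) := by ring
    rw [expand, h1, hc, one_mul, one_mul]
  rw [Finset.sum_congr rfl (fun a' _ => step a'), Finset.sum_comm]
  have inner : ∀ k : Fin d,
      (∑ a' : Fin d, E d (m * k.val) * B d k.val * E d ((a'.val : ℤ) * k.val))
      = if k = 0 then (d : ℂ) else 0 := by
    intro k
    rw [← Finset.mul_sum]
    rw [show (∑ a' : Fin d, E d ((a'.val : ℤ) * k.val)) = ∑ a' : Fin d, E d ((k.val : ℤ) * a'.val)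
      from Finset.sum_congr rfl (fun a' _ => by rw [mul_comm])]
    rw [orth d hd]
    by_cases hk : k = 0
    · subst hk
      simp only [Fin.val_zero, Nat.cast_zero, mul_zero, E_zero, if_pos (dvd_zero (d:ℤ))]
      rw [show B d 0 = 1 by simp [B]]
      simp
    · have hnd : ¬ (d : ℤ) ∣ (k.val : ℤ) := by
        rw [Int.natCast_dvd_natCast]
        intro hdvd
        exact hk (Fin.ext (Nat.eq_zero_of_dvd_of_lt hdvd k.isLt))
      rw [if_neg hnd, mul_zero, if_neg hk]
  rw [Finset.sum_congr rfl (fun k _ => inner k), Finset.sum_ite_eq' Finset.univ (0 : Fin d)]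
  simp


lemma Fmat_apply (j k : Fin d) :
    Fmat d j k = E d ((j.val : ℤ) * k.val) / (Real.sqrt d : ℂ) := by
  rw [Fmat, E]
  congr 2
  push_cast
  ring

lemma FdF_apply (hd : d ≠ 0) (v : Fin d → ℂ) (j k : Fin d) :
    (Fmat d * Matrix.diagonal v * (Fmat d)ᴴ) j k
      = (1 / (d : ℂ)) * ∑ a : Fin d, E d (((j.val : ℤ) - k.val) * a.val) * v a := by
  have hd0 : (0:ℝ) ≤ d := Nat.cast_nonneg d
  have hsq : ((Real.sqrt d : ℂ)) * (Real.sqrt d : ℂ) = (d : ℂ) := by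
    rw [← Complex.ofReal_mul, Real.mul_self_sqrt hd0]
    simp
  have hs0 : ((Real.sqrt d : ℂ)) ≠ 0 := by
    intro h
    rw [Complex.ofReal_eq_zero, Real.sqrt_eq_zero hd0, Nat.cast_eq_zero] at h
    exact hd h
  rw [Matrix.mul_apply, Finset.mul_sum]
  apply Finset.sum_congr rfl
  intro a _
  rw [Matrix.mul_diagonal, Matrix.conjTranspose_apply, Fmat_apply, Fmat_apply]
  have hconj : ∀ n : ℤ, star (E d n / (Real.sqrt d : ℂ)) = E d (-n) / (Real.sqrt d : ℂ) := by
    intro n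
    show (starRingEnd ℂ) _ = _
    rw [map_div₀, E_conj]
    congr 1
    simp [Complex.conj_ofReal]
  rw [hconj]
  have hdC : (d:ℂ) ≠ 0 := Nat.cast_ne_zero.mpr hd
  have hE : E d ((j.val : ℤ) * a.val) * E d (-((k.val : ℤ) * a.val))
      = E d (((j.val : ℤ) - k.val) * a.val) := by
    rw [← E_add]; congr 1; ring
  have hsq2 : ((Real.sqrt d : ℂ)) ^ 2 = (d : ℂ) := by rw [sq]; exact hsq
  field_simp
  rw [hsq2, ← hE]
  ring

lemma Fmat_mul_conjTranspose (hd : d ≠ 0) : Fmat d * (Fmat d)ᴴ = 1 := by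
  have h : Fmat d * (Fmat d)ᴴ = Fmat d * Matrix.diagonal (fun _ : Fin d => (1:ℂ)) * (Fmat d)ᴴ := by
    rw [Matrix.diagonal_one, Matrix.mul_one]
  rw [h]
  ext j k
  rw [FdF_apply d hd]
  simp only [mul_one]
  rw [orth d hd]
  have hdC : (d:ℂ) ≠ 0 := Nat.cast_ne_zero.mpr hd
  by_cases hjk : j = k
  · subst hjk
    rw [if_pos (by simp), Matrix.one_apply_eq]
    field_simp
  · rw [if_neg, Matrix.one_apply_ne hjk, mul_zero]
    intro hdvd
    have h0 : ((j.val : ℤ) - k.val) = 0 := by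
      refine Int.eq_zero_of_abs_lt_dvd hdvd ?_
      have h1 := j.isLt; have h2 := k.isLt
      rw [abs_lt]
      constructor <;> [push_cast; push_cast] <;> omega
    apply hjk
    apply Fin.ext
    omega

lemma conjTranspose_mul_Fmat (hd : d ≠ 0) : (Fmat d)ᴴ * Fmat d = 1 :=
  mul_eq_one_comm.mp (Fmat_mul_conjTranspose d hd)

lemma prod_struct (hd : d ≠ 0) (u v : Fin d → ℂ) :
    (Fmat d * Matrix.diagonal u * (Fmat d)ᴴ)ᴴ * (Fmat d * Matrix.diagonal v * (Fmat d)ᴴ)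
      = Fmat d * Matrix.diagonal (fun a => (starRingEnd ℂ) (u a) * v a) * (Fmat d)ᴴ := by
  calc (Fmat d * Matrix.diagonal u * (Fmat d)ᴴ)ᴴ * (Fmat d * Matrix.diagonal v * (Fmat d)ᴴ)
      = (Fmat d * (Matrix.diagonal (star u) * (Fmat d)ᴴ)) * (Fmat d * Matrix.diagonal v * (Fmat d)ᴴ) := by
        rw [Matrix.conjTranspose_mul, Matrix.conjTranspose_mul, Matrix.conjTranspose_conjTranspose,
          Matrix.diagonal_conjTranspose, Matrix.mul_assoc]
    _ = Fmat d * (Matrix.diagonal (star u) * (((Fmat d)ᴴ * Fmat d) * (Matrix.diagonal v * (Fmat d)ᴴ))) := by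
        simp only [Matrix.mul_assoc]
    _ = Fmat d * Matrix.diagonal (fun a => (starRingEnd ℂ) (u a) * v a) * (Fmat d)ᴴ := by
        rw [conjTranspose_mul_Fmat d hd, Matrix.one_mul]
        simp only [← Matrix.mul_assoc]
        rw [Matrix.mul_assoc (Fmat d), Matrix.diagonal_mul_diagonal]
        rfl

end MUF

open MUF

/-- For any circulant `M` with unit-norm columns forming a frame (all
eigenvalues nonzero), there exists a circulant `M̃` with unit-norm columns forming a
frame such that `M` and `M̃` are a pair of mutually unbiased frames, with overlap
`c = 1/(∑_j 1/r_j²)` where `r_j = |λ(M)_j|`. -/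
theorem exists_unbiased_circulant_partner (d : ℕ) [NeZero d]
    (M : Matrix (Fin d) (Fin d) ℂ) (lam : Fin d → ℂ)
    (hcirc : ∃ μ, M = circulantRow μ)
    (hdiag : M = Fmat d * Matrix.diagonal lam * (Fmat d)ᴴ)
    (hunit : ∀ k, ∑ j, ‖M j k‖ ^ 2 = 1)
    (hframe : ∀ j, lam j ≠ 0) :
    ∃ Mt : Matrix (Fin d) (Fin d) ℂ,
      (∃ ν, Mt = circulantRow ν) ∧
      (∀ k, ∑ j, ‖Mt j k‖ ^ 2 = 1) ∧
      LinearIndependent ℂ (fun k => Mtᵀ k) ∧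
      ∀ s t, ‖(Mᴴ * Mt) s t‖ ^ 2 = 1 / (∑ j, 1 / ‖lam j‖ ^ 2) := by
  classical
  have hd : d ≠ 0 := NeZero.ne d
  have hdR : (0:ℝ) < d := Nat.cast_pos.mpr (Nat.pos_of_ne_zero hd)
  have hdC : (d:ℂ) ≠ 0 := Nat.cast_ne_zero.mpr hd
  have hnormSq_eq : ∀ z : ℂ, ‖z‖ ^ 2 = Complex.normSq z := fun z => by
    rw [Complex.sq_norm]
  set S : ℝ := ∑ j, 1 / ‖lam j‖ ^ 2 with hSdef
  have hS : 0 < S := by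
    apply Finset.sum_pos
    · intro j _
      have : 0 < ‖lam j‖ := norm_pos_iff.mpr (hframe j)
      positivity
    · exact Finset.univ_nonempty
  set α : ℝ := Real.sqrt (d / S) with hαdef
  have hdS : (0:ℝ) < d / S := div_pos hdR hS
  have hα2 : α ^ 2 = d / S := Real.sq_sqrt hdS.le
  have hα0 : 0 < α := Real.sqrt_pos.mpr hdS
  set lamt : Fin d → ℂ := fun j => (α:ℂ) * B d j.val / (starRingEnd ℂ) (lam j) with hlamt
  have hconj_ne : ∀ j, (starRingEnd ℂ) (lam j) ≠ 0 := fun j => by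
    rw [starRingEnd_apply]; exact star_ne_zero.mpr (hframe j)
  have hαC : ((α:ℝ):ℂ) ≠ 0 := by exact_mod_cast hα0.ne'
  have hB_ne : ∀ n : ℤ, B d n ≠ 0 := fun n => Complex.exp_ne_zero _
  have hlamt_ne : ∀ j, lamt j ≠ 0 := fun j =>
    div_ne_zero (mul_ne_zero hαC (hB_ne _)) (hconj_ne j)
  have hBnormSq : ∀ n : ℤ, Complex.normSq (B d n) = 1 := by
    intro n
    have h1 := B_conj d n
    rw [mul_comm, Complex.mul_conj] at h1
    exact_mod_cast h1
  have hlamtSq : ∀ a : Fin d, Complex.normSq (lamt a) = (d / S) * (1 / ‖lam a‖ ^ 2) := by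
    intro a
    rw [hlamt]
    simp only []
    rw [Complex.normSq_div, Complex.normSq_mul, Complex.normSq_conj, Complex.normSq_ofReal,
      hBnormSq, hnormSq_eq]
    rw [show α * α = α ^ 2 by ring, hα2]
    ring
  set Mt : Matrix (Fin d) (Fin d) ℂ := Fmat d * Matrix.diagonal lamt * (Fmat d)ᴴ with hMt
  have hMtMt : Mtᴴ * Mt
      = Fmat d * Matrix.diagonal (fun a => (starRingEnd ℂ) (lamt a) * lamt a) * (Fmat d)ᴴ :=
    prod_struct d hd lamt lamt
  refine ⟨Mt, ?_, ?_, ?_, ?_⟩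
  · -- circulant
    refine ⟨fun mm => (1/(d:ℂ)) * ∑ a : Fin d, E d (-((mm.val:ℤ)) * a.val) * lamt a, ?_⟩
    ext j k
    rw [hMt, FdF_apply d hd, circulantRow]
    congr 1
    apply Finset.sum_congr rfl
    intro a _
    congr 1
    apply E_mod
    have hsub : (d:ℤ) ∣ (((k - j : Fin d).val : ℤ) - ((k.val:ℤ) - j.val)) := by
      have h1 : ((k - j : Fin d)).val = (d - j.val + k.val) % d := by
        rw [Fin.sub_def]
      have h2 : (d:ℤ) * (((d - j.val + k.val) / d : ℕ):ℤ)
            + (((d - j.val + k.val) % d : ℕ):ℤ) = ((d - j.val + k.val : ℕ):ℤ) := by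
        exact_mod_cast Nat.div_add_mod (d - j.val + k.val) d
      have hx : ((d - j.val + k.val : ℕ):ℤ) = (d:ℤ) - j.val + k.val := by
        have := j.isLt
        push_cast
        omega
      refine ⟨1 - (((d - j.val + k.val) / d : ℕ):ℤ), ?_⟩
      rw [h1]
      push_cast at h2 hx ⊢
      linear_combination h2 + hx
    rw [show ((j.val:ℤ) - k.val) * a.val - (-(((k - j : Fin d).val : ℤ)) * a.val)
        = (((k - j : Fin d).val : ℤ) - ((k.val:ℤ) - j.val)) * a.val by ring]
    exact Dvd.dvd.mul_right hsub _
  · -- unit columns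
    intro k
    have hentry : (Mtᴴ * Mt) k k = 1 := by
      rw [hMtMt, FdF_apply d hd]
      rw [Finset.sum_congr rfl (fun a (_ : a ∈ Finset.univ) => by
        rw [sub_self, zero_mul, E_zero, one_mul, mul_comm, Complex.mul_conj, hlamtSq a])]
      rw [← Complex.ofReal_sum, ← Finset.mul_sum, ← hSdef]
      rw [show (d / S) * S = (d:ℝ) by field_simp]
      field_simp
      simp
    have hsum : ((∑ j, ‖Mt j k‖ ^ 2 : ℝ) : ℂ) = (Mtᴴ * Mt) k k := by
      rw [Matrix.mul_apply, Complex.ofReal_sum]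
      apply Finset.sum_congr rfl
      intro j _
      rw [Matrix.conjTranspose_apply, hnormSq_eq, mul_comm,
        show star (Mt j k) = (starRingEnd ℂ) (Mt j k) from rfl, Complex.mul_conj]
    have : ((∑ j, ‖Mt j k‖ ^ 2 : ℝ) : ℂ) = ((1:ℝ):ℂ) := by
      rw [hsum, hentry]; simp
    exact_mod_cast this
  · -- linear independence
    apply Matrix.linearIndependent_cols_iff_isUnit.mpr
    have hF : IsUnit (Fmat d) :=
      @isUnit_of_invertible _ _ _ (invertibleOfRightInverse _ _ (Fmat_mul_conjTranspose d hd))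
    have hFH : IsUnit ((Fmat d)ᴴ) :=
      @isUnit_of_invertible _ _ _ (invertibleOfRightInverse _ _ (conjTranspose_mul_Fmat d hd))
    have hD : IsUnit (Matrix.diagonal lamt) := by
      apply Matrix.isUnit_diagonal.mpr
      exact IsUnit.of_mul_eq_one (a := lamt) (fun a => (lamt a)⁻¹)
        (by ext a; simp [mul_inv_cancel₀ (hlamt_ne a)])
    exact (hF.mul hD).mul hFH
  · -- overlap
    intro s t
    have hMmul : Mᴴ * Mt
        = Fmat d * Matrix.diagonal (fun a => (starRingEnd ℂ) (lam a) * lamt a) * (Fmat d)ᴴ := by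
      rw [hdiag, hMt]
      exact prod_struct d hd lam lamt
    have hsimp : ∀ a : Fin d, (starRingEnd ℂ) (lam a) * lamt a = (α:ℂ) * B d a.val := by
      intro a
      rw [hlamt]
      simp only []
      rw [mul_div_assoc']
      rw [mul_comm ((starRingEnd ℂ) (lam a))]
      rw [mul_div_assoc, div_self (hconj_ne a), mul_one]
    rw [hMmul, FdF_apply d hd]
    set m : ℤ := (s.val:ℤ) - t.val with hm
    have hflat := flat d hd m
    set Sig0 : ℂ := ∑ a : Fin d, E d (m * a.val) * B d a.val with hSig0
    have hnorm : Complex.normSq Sig0 = d := by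
      rw [Complex.mul_conj] at hflat
      exact_mod_cast hflat
    have hsum2 : (∑ a : Fin d, E d (m * a.val) * ((starRingEnd ℂ) (lam a) * lamt a))
        = (α:ℂ) * Sig0 := by
      rw [hSig0, Finset.mul_sum]
      apply Finset.sum_congr rfl
      intro a _
      rw [hsimp a]
      ring
    rw [hsum2]
    rw [hnormSq_eq, Complex.normSq_mul, Complex.normSq_mul, hnorm, Complex.normSq_ofReal]
    rw [show Complex.normSq (1/(d:ℂ)) = 1/(d:ℝ)^2 by
      rw [Complex.normSq_div, Complex.normSq_one]
      norm_num [Complex.normSq_natCast]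
      rw [sq, mul_inv]]
    rw [show α * α = α ^ 2 by ring, hα2]
    field_simp
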